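/- For every integer r ≥ 0, every finite simple graph G contains a bipartite subgraph Ĝ with ∇_r(Ĝ) ≥ ∇_r(G)/2. -/

import Mathlib

/-- Average degree `2|E|/|V|` of a graph (as a real number). -/
noncomputable def avgDeg {V : Type*} (G : SimpleGraph V) : ℝ :=
  2 * G.edgeSet.ncard / Nat.card V

/-- `M` is a depth-`r` shallow minor of `G`: it is obtained by contracting pairwise disjoint
connected subgraphs of radius at most `r` in `G` into vertices and then taking a subgraph. -/
def IsShallowMinor (r : ℕ) {β α : Type*} (G : SimpleGraph β) (M : SimpleGraph α) : Prop :=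
  ∃ φ : α → Set β, (∀ a, (φ a).Nonempty) ∧
    (∀ a, ∃ c : φ a, ∀ v : φ a, ∃ p : (SimpleGraph.induce (φ a) G).Walk c v, p.length ≤ r) ∧
    (∀ a b, a ≠ b → Disjoint (φ a) (φ b)) ∧
    (∀ a b, M.Adj a b → ∃ u ∈ φ a, ∃ v ∈ φ b, G.Adj u v)

/-- `∇_r(G)`: the greatest average degree of a depth-`r` shallow minor of `G`. -/
noncomputable def nablaR (r : ℕ) {β : Type*} (G : SimpleGraph β) : ℝ :=
  sSup {d : ℝ | ∃ (n : ℕ) (M : SimpleGraph (Fin n)), n ≠ 0 ∧ IsShallowMinor r G M ∧ d = avgDeg M}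

open Finset in
lemma exists_flip {n : ℕ} (E₀ : Finset (Sym2 (Fin n))) (σ : Sym2 (Fin n) → Bool)
    (hND : ∀ e ∈ E₀, e.out.1 ≠ e.out.2) :
    ∃ f : Fin n → Bool,
      E₀.card ≤ 2 * (E₀.filter (fun e => xor (f e.out.1) (f e.out.2) = σ e)).card := by
  classical
  have key : ∀ e ∈ E₀,
      2 * (univ.filter (fun f : Fin n → Bool => xor (f e.out.1) (f e.out.2) = σ e)).card
        = 2 ^ n := by
    intro e he
    set A := e.out.1; set B := e.out.2
    have hAB : A ≠ B := hND e he
    have hbij : (univ.filter (fun f : Fin n → Bool => xor (f A) (f B) = σ e)).card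
        = (univ.filter (fun f : Fin n → Bool => ¬ (xor (f A) (f B) = σ e))).card := by
      refine Finset.card_bij' (fun f _ => Function.update f A (!(f A)))
        (fun f _ => Function.update f A (!(f A))) ?hi ?hj ?left ?right
      case hi =>
        intro f hf
        simp only [mem_filter, mem_univ, true_and] at hf ⊢
        rw [Function.update_self, Function.update_of_ne hAB.symm]
        revert hf; cases f A <;> cases f B <;> cases σ e <;> decide
      case hj =>
        intro f hf
        simp only [mem_filter, mem_univ, true_and] at hf ⊢
        rw [Function.update_self, Function.update_of_ne hAB.symm]
        revert hf; cases f A <;> cases f B <;> cases σ e <;> decide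
      case left =>
        intro f _
        funext x
        by_cases hx : x = A
        · subst hx; simp [Function.update_self]
        · simp [Function.update_of_ne hx]
      case right =>
        intro f _
        funext x
        by_cases hx : x = A
        · subst hx; simp [Function.update_self]
        · simp [Function.update_of_ne hx]
    have hsplit := Finset.card_filter_add_card_filter_not
      (s := (univ : Finset (Fin n → Bool)))
      (p := fun f => xor (f A) (f B) = σ e)
    have hcardU : (univ : Finset (Fin n → Bool)).card = 2 ^ n := by
      simp [Fintype.card_fun]
    rw [two_mul]
    nth_rewrite 2 [hbij]
    rw [hsplit, hcardU]
  -- double counting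
  have hsum : ∑ f : Fin n → Bool, 2 * (E₀.filter
        (fun e => xor (f e.out.1) (f e.out.2) = σ e)).card = E₀.card * 2 ^ n := by
    have : ∀ f : Fin n → Bool, (E₀.filter (fun e => xor (f e.out.1) (f e.out.2) = σ e)).card
        = ∑ e ∈ E₀, if xor (f e.out.1) (f e.out.2) = σ e then 1 else 0 := by
      intro f; rw [Finset.card_filter]
    calc ∑ f : Fin n → Bool, 2 * (E₀.filter
          (fun e => xor (f e.out.1) (f e.out.2) = σ e)).card
        = ∑ f : Fin n → Bool, ∑ e ∈ E₀,
            2 * if xor (f e.out.1) (f e.out.2) = σ e then 1 else 0 := by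
          simp_rw [this, Finset.mul_sum]
      _ = ∑ e ∈ E₀, ∑ f : Fin n → Bool,
            2 * if xor (f e.out.1) (f e.out.2) = σ e then 1 else 0 := Finset.sum_comm
      _ = ∑ e ∈ E₀, 2 ^ n := by
          refine Finset.sum_congr rfl fun e he => ?_
          rw [← Finset.mul_sum, ← Finset.card_filter]
          exact key e he
      _ = E₀.card * 2 ^ n := by simp [mul_comm]
  have hconst : ∑ _f : Fin n → Bool, E₀.card = E₀.card * 2 ^ n := by
    simp [Fintype.card_fun, mul_comm]
  have := Finset.exists_le_of_sum_le (s := (univ : Finset (Fin n → Bool)))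
    (f := fun _ => E₀.card)
    (g := fun f => 2 * (E₀.filter (fun e => xor (f e.out.1) (f e.out.2) = σ e)).card)
    Finset.univ_nonempty (by rw [hsum]; exact le_of_eq hconst)
  obtain ⟨f, _, hf⟩ := this
  exact ⟨f, hf⟩

open SimpleGraph in
lemma exists_pred {X : Type*} (H : SimpleGraph X) {c v : X} (hr : H.Reachable c v)
    (hv : v ≠ c) : ∃ u, H.Adj u v ∧ H.dist c u + 1 = H.dist c v := by
  obtain ⟨p, hp⟩ := hr.exists_walk_length_eq_dist
  have hpr : (p.reverse).length = H.dist c v := by rw [SimpleGraph.Walk.length_reverse]; exact hp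
  set pr : H.Walk v c := p.reverse with hprdef
  clear_value pr
  cases pr with
  | nil => exact absurd rfl hv
  | @cons _ u _ h q =>
    refine ⟨u, h.symm, ?_⟩
    have h1 : H.dist c u ≤ q.length := by
      have := SimpleGraph.dist_le q.reverse
      rwa [SimpleGraph.Walk.length_reverse] at this
    have h2 : H.dist c v ≤ H.dist c u + 1 := by
      obtain ⟨w0, hw0⟩ := (q.reverse.reachable).exists_walk_length_eq_dist
      have := SimpleGraph.dist_le (w0.concat h.symm)
      rwa [SimpleGraph.Walk.length_concat, hw0] at this
    have h3 : q.length + 1 = H.dist c v := by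
      simpa using hpr
    omega

lemma minor_bounds {W : Type*} [Finite W] {r n : ℕ} {H : SimpleGraph W}
    {M : SimpleGraph (Fin n)} (h : IsShallowMinor r H M) :
    n ≤ Nat.card W ∧ M.edgeSet.ncard ≤ n * n := by
  obtain ⟨φ, hne, _, hdisj, _⟩ := h
  constructor
  · have hinj : Function.Injective (fun a : Fin n => (hne a).some) := by
      intro a b hab
      simp only at hab
      by_contra hne'
      have hm := (hne a).some_mem
      rw [hab] at hm
      exact Set.disjoint_left.mp (hdisj a b hne') hm (hne b).some_mem
    simpa using Nat.card_le_card_of_injective _ hinj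
  · have h1 : M.edgeSet.ncard ≤ Nat.card (Sym2 (Fin n)) := by
      rw [← Set.ncard_univ]
      exact Set.ncard_le_ncard (Set.subset_univ _) Set.finite_univ
    have h2 : Nat.card (Sym2 (Fin n)) ≤ n * n := by
      have hinj : Function.Injective (Quot.out : Sym2 (Fin n) → Fin n × Fin n) := by
        intro e f hef
        rw [← e.out_eq, ← f.out_eq, hef]
      have := Nat.card_le_card_of_injective _ hinj
      simpa using this
    omega

lemma avg_le {W : Type*} [Finite W] {r n : ℕ} {H : SimpleGraph W}
    {M : SimpleGraph (Fin n)} (hn : n ≠ 0) (h : IsShallowMinor r H M) :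
    avgDeg M ≤ 2 * Nat.card W := by
  obtain ⟨h1, h2⟩ := minor_bounds h
  rw [avgDeg, Nat.card_eq_fintype_card, Fintype.card_fin]
  rw [div_le_iff₀ (by positivity)]
  have : (M.edgeSet.ncard : ℝ) ≤ (n : ℝ) * n := by exact_mod_cast h2
  have hn' : (n : ℝ) ≤ Nat.card W := by exact_mod_cast h1
  have h0 : (0:ℝ) < n := by positivity
  nlinarith

lemma nabla_set_bddAbove {W : Type*} [Finite W] (r : ℕ) (H : SimpleGraph W) :
    BddAbove {d : ℝ | ∃ (n : ℕ) (M : SimpleGraph (Fin n)),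
      n ≠ 0 ∧ IsShallowMinor r H M ∧ d = avgDeg M} := by
  refine ⟨2 * Nat.card W, ?_⟩
  rintro d ⟨n, M, hn, hmin, rfl⟩
  exact avg_le hn hmin

lemma nabla_set_finite {W : Type*} [Finite W] (r : ℕ) (H : SimpleGraph W) :
    {d : ℝ | ∃ (n : ℕ) (M : SimpleGraph (Fin n)),
      n ≠ 0 ∧ IsShallowMinor r H M ∧ d = avgDeg M}.Finite := by
  set K := Nat.card W * Nat.card W + Nat.card W with hK
  apply Set.Finite.subset (((Set.finite_Iic K).prod (Set.finite_Iic K)).image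
    (fun p : ℕ × ℕ => 2 * (p.1 : ℝ) / p.2))
  rintro d ⟨n, M, hn, hmin, rfl⟩
  obtain ⟨h1, h2⟩ := minor_bounds hmin
  refine ⟨(M.edgeSet.ncard, n), ⟨?_, ?_⟩, ?_⟩
  · simp only [Set.mem_Iic]
    have := Nat.mul_le_mul h1 h1
    omega
  · simp only [Set.mem_Iic]; omega
  · simp [avgDeg, Nat.card_eq_fintype_card]

lemma main_step {V : Type*} [Fintype V] (r n : ℕ) (G : SimpleGraph V)
    (M : SimpleGraph (Fin n)) (hn : n ≠ 0) (hM : IsShallowMinor r G M) :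
    ∃ Ghat : G.Subgraph, Ghat.coe.Colorable 2 ∧ avgDeg M / 2 ≤ nablaR r Ghat.coe := by
  classical
  obtain ⟨φ, hne, hrad, hdisj, hadj⟩ := hM
  choose cc hcc using hrad
  have huniq : ∀ {x : V} {a b : Fin n}, x ∈ φ a → x ∈ φ b → a = b := by
    intro x a b ha hb
    by_contra hab
    exact Set.disjoint_left.mp (hdisj a b hab) ha hb
  have hExt : ∀ a b : Fin n, ∃ u ∈ φ a, ∃ v ∈ φ b, (M.Adj a b → G.Adj u v) := by
    intro a b
    by_cases h : M.Adj a b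
    · obtain ⟨u, hu, v, hv, hG⟩ := hadj a b h
      exact ⟨u, hu, v, hv, fun _ => hG⟩
    · exact ⟨(hne a).some, (hne a).some_mem, (hne b).some, (hne b).some_mem,
        fun h' => absurd h' h⟩
  choose uu hu vv hv hGadj using hExt
  -- parity function
  set par : Fin n → V → Bool := fun a w =>
    if h : w ∈ φ a then ((SimpleGraph.induce (φ a) G).dist (cc a) ⟨w, h⟩).bodd else false
    with hpardef
  set σe : Sym2 (Fin n) → Bool := fun e =>
    !(xor (par e.out.1 (uu e.out.1 e.out.2)) (par e.out.2 (vv e.out.1 e.out.2))) with hσdef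
  have hEfin : M.edgeSet.Finite := M.edgeSet.toFinite
  set E₀ : Finset (Sym2 (Fin n)) := hEfin.toFinset with hE₀
  have houtadj : ∀ e ∈ M.edgeSet, M.Adj e.out.1 e.out.2 := by
    intro e he
    rw [← (Quot.out_eq e : s(e.out.1, e.out.2) = e)] at he
    exact he
  have hND : ∀ e ∈ E₀, e.out.1 ≠ e.out.2 := by
    intro e he
    exact (houtadj e (hEfin.mem_toFinset.mp he)).ne
  obtain ⟨f, hf⟩ := exists_flip E₀ σe hND
  have hswap : ∀ a b : Fin n,
      xor (f (s(a,b)).out.1) (f (s(a,b)).out.2) = xor (f a) (f b) := by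
    intro a b
    have hout : s((s(a,b)).out.1, (s(a,b)).out.2) = s(a,b) := Quot.out_eq _
    set x := (s(a,b) : Sym2 (Fin n)).out.1 with hx
    set y := (s(a,b) : Sym2 (Fin n)).out.2 with hy
    rcases Sym2.eq_iff.mp hout with ⟨h1, h2⟩ | ⟨h1, h2⟩
    · rw [h1, h2]
    · rw [h1, h2, Bool.xor_comm]
  -- the kept bipartite minor
  set M' : SimpleGraph (Fin n) :=
    SimpleGraph.fromRel (fun a b => M.Adj a b ∧ xor (f a) (f b) = σe s(a,b)) with hM'def
  have hM'adj : ∀ a b : Fin n, M'.Adj a b ↔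
      (M.Adj a b ∧ xor (f a) (f b) = σe s(a,b)) := by
    intro a b
    constructor
    · rintro ⟨hne', ⟨h1, h2⟩ | ⟨h1, h2⟩⟩
      · exact ⟨h1, h2⟩
      · refine ⟨h1.symm, ?_⟩
        rw [Bool.xor_comm]
        rwa [Sym2.eq_swap] at h2
    · intro h
      exact ⟨h.1.ne, Or.inl h⟩
  have hM'keep : ∀ e ∈ M'.edgeSet, xor (f e.out.1) (f e.out.2) = σe e := by
    intro e he
    have heq : s(e.out.1, e.out.2) = e := Quot.out_eq e
    rw [← heq] at he
    have := (hM'adj _ _).mp he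
    rw [heq] at this
    exact this.2
  have hM'sub : ∀ e ∈ M'.edgeSet, e ∈ M.edgeSet := by
    intro e he
    have heq : s(e.out.1, e.out.2) = e := Quot.out_eq e
    rw [← heq] at he ⊢
    exact ((hM'adj _ _).mp he).1
  -- the bipartite subgraph
  set U : Sym2 (Fin n) → V := fun e => uu e.out.1 e.out.2 with hUdef
  set W : Sym2 (Fin n) → V := fun e => vv e.out.1 e.out.2 with hWdef
  set Ghat : G.Subgraph := {
    verts := ⋃ a, φ a
    Adj := fun x y =>
      (∃ a, x ∈ φ a ∧ y ∈ φ a ∧ G.Adj x y ∧ par a x ≠ par a y) ∨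
      (∃ e ∈ M'.edgeSet, ((x = U e ∧ y = W e) ∨ (y = U e ∧ x = W e)))
    adj_sub := by
      rintro x y (⟨a, _, _, hG, _⟩ | ⟨e, he, h⟩)
      · exact hG
      · have hG := hGadj _ _ (houtadj e (hM'sub e he))
        rcases h with ⟨rfl, rfl⟩ | ⟨rfl, rfl⟩
        · exact hG
        · exact hG.symm
    edge_vert := by
      rintro x y (⟨a, hx, _, _, _⟩ | ⟨e, he, h⟩)
      · exact Set.mem_iUnion.mpr ⟨a, hx⟩
      · rcases h with ⟨rfl, _⟩ | ⟨_, rfl⟩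
        · exact Set.mem_iUnion.mpr ⟨e.out.1, hu _ _⟩
        · exact Set.mem_iUnion.mpr ⟨e.out.2, hv _ _⟩
    symm := by
      constructor
      rintro x y (⟨a, hx, hy, hG, hp⟩ | ⟨e, he, h⟩)
      · exact Or.inl ⟨a, hy, hx, hG.symm, Ne.symm hp⟩
      · exact Or.inr ⟨e, he, by tauto⟩ } with hGhatdef
  have hverts : ∀ {x : V} {a : Fin n}, x ∈ φ a → x ∈ Ghat.verts :=
    fun {x a} h => Set.mem_iUnion.mpr ⟨a, h⟩
  have hxmem : ∀ x : ↥Ghat.verts, ∃ a, (x : V) ∈ φ a := fun x => Set.mem_iUnion.mp x.2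
  choose ix hix using hxmem
  have keyb : ∀ p q fa fb : Bool, (fa ^^ fb) = !(p ^^ q) → (p ^^ fa) ≠ (q ^^ fb) := by decide
  have keyb' : ∀ p q fa fb : Bool, (fa ^^ fb) = !(p ^^ q) → (q ^^ fb) ≠ (p ^^ fa) := by decide
  have keyb2 : ∀ p q c : Bool, p ≠ q → (p ^^ c) ≠ (q ^^ c) := by decide
  have hcol2 : Ghat.coe.Colorable 2 := by
    have C : Ghat.coe.Coloring Bool := SimpleGraph.Coloring.mk
      (fun x => xor (par (ix x) (x : V)) (f (ix x))) (by
        intro x y hxy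
        show (par (ix x) (x : V) ^^ f (ix x)) ≠ (par (ix y) (y : V) ^^ f (ix y))
        have hxy' : (∃ a, (x:V) ∈ φ a ∧ (y:V) ∈ φ a ∧ G.Adj (x:V) (y:V) ∧
            par a (x:V) ≠ par a (y:V)) ∨
            (∃ e ∈ M'.edgeSet, (((x:V) = U e ∧ (y:V) = W e) ∨ ((y:V) = U e ∧ (x:V) = W e))) :=
          hxy
        rcases hxy' with ⟨a, hx1, hy1, _, hp⟩ | ⟨e, he, hcase⟩
        · have hxa : ix x = a := huniq (hix x) hx1
          have hya : ix y = a := huniq (hix y) hy1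
          rw [hxa, hya]
          exact keyb2 _ _ _ hp
        · have hkeep := hM'keep e he
          rcases hcase with ⟨hx1, hy1⟩ | ⟨hy1, hx1⟩
          · have hxa : ix x = e.out.1 := huniq (hix x) (by rw [hx1]; exact hu _ _)
            have hya : ix y = e.out.2 := huniq (hix y) (by rw [hy1]; exact hv _ _)
            rw [hxa, hya, hx1, hy1]
            exact keyb _ _ _ _ hkeep
          · have hxa : ix x = e.out.2 := huniq (hix x) (by rw [hx1]; exact hv _ _)
            have hya : ix y = e.out.1 := huniq (hix y) (by rw [hy1]; exact hu _ _)
            rw [hxa, hya, hx1, hy1]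
            exact keyb' _ _ _ _ hkeep)
    simpa using C.colorable
  -- branch sets inside Ghat
  set φ' : Fin n → Set ↥Ghat.verts := fun a => {x : ↥Ghat.verts | (x : V) ∈ φ a} with hφ'def
  have hkey : ∀ (k : ℕ) (a : Fin n) (v : ↥(φ a)),
      (SimpleGraph.induce (φ a) G).dist (cc a) v ≤ k →
      ∃ p : (SimpleGraph.induce (φ' a) Ghat.coe).Walk
        ⟨⟨((cc a) : V), hverts (cc a).2⟩, (cc a).2⟩ ⟨⟨(v : V), hverts v.2⟩, v.2⟩,
        p.length ≤ (SimpleGraph.induce (φ a) G).dist (cc a) v := by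
    intro k
    induction k with
    | zero =>
      intro a v hd
      have hreach : (SimpleGraph.induce (φ a) G).Reachable (cc a) v := by
        obtain ⟨p₀, _⟩ := hcc a v; exact p₀.reachable
      have h0 : cc a = v := hreach.dist_eq_zero_iff.mp (Nat.le_zero.mp hd)
      have h0v : ((cc a : V)) = (v : V) := congrArg Subtype.val h0
      have heq : (⟨⟨((cc a) : V), hverts (cc a).2⟩, (cc a).2⟩ : ↥(φ' a))
          = ⟨⟨(v : V), hverts v.2⟩, v.2⟩ := Subtype.ext (Subtype.ext h0v)
      exact ⟨SimpleGraph.Walk.nil.copy rfl heq, by simp⟩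
    | succ k ih =>
      intro a v hd
      have hreach : (SimpleGraph.induce (φ a) G).Reachable (cc a) v := by
        obtain ⟨p₀, _⟩ := hcc a v; exact p₀.reachable
      by_cases h0 : (SimpleGraph.induce (φ a) G).dist (cc a) v = 0
      · have h0' : cc a = v := hreach.dist_eq_zero_iff.mp h0
        have h0v : ((cc a : V)) = (v : V) := congrArg Subtype.val h0'
        have heq : (⟨⟨((cc a) : V), hverts (cc a).2⟩, (cc a).2⟩ : ↥(φ' a))
            = ⟨⟨(v : V), hverts v.2⟩, v.2⟩ := Subtype.ext (Subtype.ext h0v)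
        exact ⟨SimpleGraph.Walk.nil.copy rfl heq, by simp⟩
      · have hvne : v ≠ cc a := by
          intro h
          rw [h, SimpleGraph.dist_self] at h0
          exact h0 rfl
        obtain ⟨u, hadjuv, hdist⟩ := exists_pred _ hreach hvne
        have hdu : (SimpleGraph.induce (φ a) G).dist (cc a) u ≤ k := by omega
        obtain ⟨p', hp'⟩ := ih a u hdu
        have hGuv : G.Adj (u : V) (v : V) := hadjuv
        have hedge : (SimpleGraph.induce (φ' a) Ghat.coe).Adj
            ⟨⟨(u : V), hverts u.2⟩, u.2⟩ ⟨⟨(v : V), hverts v.2⟩, v.2⟩ := by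
          show Ghat.Adj (u : V) (v : V)
          have hpu : par a (u : V) = ((SimpleGraph.induce (φ a) G).dist (cc a) u).bodd := by
            rw [hpardef]
            exact dif_pos u.2
          have hpv : par a (v : V) = ((SimpleGraph.induce (φ a) G).dist (cc a) v).bodd := by
            rw [hpardef]
            exact dif_pos v.2
          refine Or.inl ⟨a, u.2, v.2, hGuv, ?_⟩
          rw [hpu, hpv, ← hdist, Nat.bodd_succ]
          cases ((SimpleGraph.induce (φ a) G).dist (cc a) u).bodd <;> simp
        refine ⟨p'.concat hedge, ?_⟩
        rw [SimpleGraph.Walk.length_concat]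
        omega
  have hrad' : ∀ a, ∃ c : φ' a, ∀ w : φ' a,
      ∃ p : (SimpleGraph.induce (φ' a) Ghat.coe).Walk c w, p.length ≤ r := by
    intro a
    refine ⟨⟨⟨((cc a) : V), hverts (cc a).2⟩, (cc a).2⟩, ?_⟩
    intro w
    have hw : ((w : ↥Ghat.verts) : V) ∈ φ a := w.2
    have hdr : (SimpleGraph.induce (φ a) G).dist (cc a) ⟨((w : ↥Ghat.verts) : V), hw⟩ ≤ r := by
      obtain ⟨p₀, hp₀⟩ := hcc a ⟨((w : ↥Ghat.verts) : V), hw⟩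
      exact le_trans (SimpleGraph.dist_le p₀) hp₀
    obtain ⟨p, hp⟩ := hkey _ a ⟨((w : ↥Ghat.verts) : V), hw⟩ le_rfl
    exact ⟨p, le_trans hp hdr⟩
  have hminor' : IsShallowMinor r Ghat.coe M' := by
    refine ⟨φ', ?_, hrad', ?_, ?_⟩
    · intro a
      exact ⟨⟨((cc a) : V), hverts (cc a).2⟩, (cc a).2⟩
    · intro a b hab
      rw [Set.disjoint_left]
      intro x hxa hxb
      exact hab (huniq hxa hxb)
    · intro a b hab
      have he : s(a, b) ∈ M'.edgeSet := hab
      have hout : s((s(a,b)).out.1, (s(a,b)).out.2) = s(a,b) := Quot.out_eq _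
      have hGadjUW : Ghat.Adj (U s(a,b)) (W s(a,b)) := Or.inr ⟨s(a,b), he, Or.inl ⟨rfl, rfl⟩⟩
      set x := (s(a,b) : Sym2 (Fin n)).out.1 with hx
      set y := (s(a,b) : Sym2 (Fin n)).out.2 with hy
      rcases Sym2.eq_iff.mp hout with ⟨h1, h2⟩ | ⟨h1, h2⟩
      · refine ⟨⟨U s(a,b), hverts (hu x y)⟩, ?_, ⟨W s(a,b), hverts (hv x y)⟩, ?_, ?_⟩
        · show uu x y ∈ φ a
          rw [← h1]; exact hu x y
        · show vv x y ∈ φ b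
          rw [← h2]; exact hv x y
        · exact hGadjUW
      · refine ⟨⟨W s(a,b), hverts (hv x y)⟩, ?_, ⟨U s(a,b), hverts (hu x y)⟩, ?_, ?_⟩
        · show vv x y ∈ φ a
          rw [← h2]; exact hv x y
        · show uu x y ∈ φ b
          rw [← h1]; exact hu x y
        · exact hGadjUW.symm
  -- edge counting
  have hEq : M'.edgeSet = ↑(E₀.filter (fun e => xor (f e.out.1) (f e.out.2) = σe e)) := by
    ext e
    induction e using Sym2.ind with
    | _ a b =>
      rw [SimpleGraph.mem_edgeSet, Finset.mem_coe, Finset.mem_filter, hM'adj,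
        hEfin.mem_toFinset, SimpleGraph.mem_edgeSet, hswap a b]
  have hcM : M.edgeSet.ncard = E₀.card := Set.ncard_eq_toFinset_card _ hEfin
  have hcM' : M'.edgeSet.ncard
      = (E₀.filter (fun e => xor (f e.out.1) (f e.out.2) = σe e)).card := by
    rw [hEq, Set.ncard_coe_finset]
  refine ⟨Ghat, hcol2, ?_⟩
  have hmem : avgDeg M' ∈ {d : ℝ | ∃ (m : ℕ) (N : SimpleGraph (Fin m)),
      m ≠ 0 ∧ IsShallowMinor r Ghat.coe N ∧ d = avgDeg N} := ⟨n, M', hn, hminor', rfl⟩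
  have hle2 : avgDeg M' ≤ nablaR r Ghat.coe := le_csSup (nabla_set_bddAbove r Ghat.coe) hmem
  refine le_trans ?_ hle2
  rw [avgDeg, avgDeg, Nat.card_eq_fintype_card, Fintype.card_fin, hcM, hcM']
  have hn0 : (0:ℝ) < n := by
    have := Nat.pos_of_ne_zero hn
    exact_mod_cast this
  have h1 : (E₀.card : ℝ)
      ≤ 2 * ((E₀.filter (fun e => xor (f e.out.1) (f e.out.2) = σe e)).card : ℝ) := by
    exact_mod_cast hf
  calc 2 * (E₀.card : ℝ) / n / 2 = (E₀.card : ℝ) / n := by ring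
    _ ≤ 2 * ((E₀.filter (fun e => xor (f e.out.1) (f e.out.2) = σe e)).card : ℝ) / n := by
        gcongr
    _ = 2 * ((E₀.filter (fun e => xor (f e.out.1) (f e.out.2) = σe e)).card : ℝ) / n := rfl

/-- For every `r ≥ 0`, every finite simple graph `G` contains a bipartite subgraph `Ĝ`
with `∇_r(Ĝ) ≥ ∇_r(G)/2`. -/
theorem stmt7 (r : ℕ) {V : Type*} [Fintype V] (G : SimpleGraph V) :
    ∃ Ghat : G.Subgraph, Ghat.coe.Colorable 2 ∧ nablaR r G / 2 ≤ nablaR r Ghat.coe := by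
  classical
  have hfin := nabla_set_finite r G
  rcases Set.eq_empty_or_nonempty {d : ℝ | ∃ (n : ℕ) (M : SimpleGraph (Fin n)),
      n ≠ 0 ∧ IsShallowMinor r G M ∧ d = avgDeg M} with hemp | hne
  · have hIE : IsEmpty ↥((⊥ : G.Subgraph).verts) := by
      rw [SimpleGraph.Subgraph.verts_bot]
      exact Set.isEmpty_coe_sort.mpr rfl
    refine ⟨⊥, ?_, ?_⟩
    · have C : (⊥ : G.Subgraph).coe.Coloring (Fin 2) := SimpleGraph.Coloring.mk
        (fun _ => 0) (by
          intro v w _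
          exact (hIE.false v).elim)
      simpa using C.colorable
    · have h1 : nablaR r G = 0 := by rw [nablaR, hemp, Real.sSup_empty]
      have h2 : nablaR r (⊥ : G.Subgraph).coe = 0 := by
        rw [nablaR]
        have hemp2 : {d : ℝ | ∃ (n : ℕ) (M : SimpleGraph (Fin n)),
            n ≠ 0 ∧ IsShallowMinor r (⊥ : G.Subgraph).coe M ∧ d = avgDeg M} = ∅ := by
          rw [Set.eq_empty_iff_forall_notMem]
          rintro d ⟨n, M, hn, ⟨ψ, hψne, -, -, -⟩, -⟩
          obtain ⟨x, -⟩ := hψne ⟨0, Nat.pos_of_ne_zero hn⟩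
          exact (hIE.false x).elim
        rw [hemp2, Real.sSup_empty]
      rw [h1, h2]
      norm_num
  · have hmem := hne.csSup_mem hfin
    obtain ⟨n, M, hn, hmin, hd⟩ := hmem
    obtain ⟨Ghat, hcol, hle⟩ := main_step r n G M hn hmin
    refine ⟨Ghat, hcol, ?_⟩
    have hEq : nablaR r G = avgDeg M := hd
    rw [hEq]
    exact hle
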